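/- For α ∈ (0,1), the unique minimizer over y > 0 of g(y) = (e^y − 1)^α / y satisfies the first-order condition α·e^y·y = e^y − 1, whose solution is y = W(−α^{−1}·e^{−α^{−1}}) + α^{−1}, where W is the (principal branch of the) Lambert W function. -/

import Mathlib

open Real Set

noncomputable def hfun (α y : ℝ) : ℝ := α * Real.log (Real.exp y - 1) - Real.log y
noncomputable def pfun (α y : ℝ) : ℝ := α * (Real.exp y / (Real.exp y - 1)) - y⁻¹

lemma expy_sub_one_pos {y : ℝ} (hy : 0 < y) : 0 < Real.exp y - 1 := by
  have := Real.exp_lt_exp.mpr hy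
  simp only [Real.exp_zero] at this
  linarith

lemma key_ineq {y : ℝ} (hy : 0 < y) : y * Real.exp (y/2) < Real.exp y - 1 := by
  have h1 : y/2 < Real.sinh (y/2) := Real.self_lt_sinh_iff.mpr (by linarith)
  have h2 : Real.sinh (y/2) = (Real.exp (y/2) - Real.exp (-(y/2)))/2 := Real.sinh_eq _
  have h3 : Real.exp (y/2) * Real.exp (y/2) = Real.exp y := by
    rw [← Real.exp_add]; ring_nf
  have h4 : Real.exp (y/2) * Real.exp (-(y/2)) = 1 := by
    rw [← Real.exp_add]; simp
  have h5 : 0 < Real.exp (y/2) := Real.exp_pos _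
  nlinarith [h1, h2]

lemma hasDerivAt_hfun {α y : ℝ} (hy : 0 < y) :
    HasDerivAt (hfun α) (pfun α y) y := by
  have hne : Real.exp y - 1 ≠ 0 := (expy_sub_one_pos hy).ne'
  have d1 : HasDerivAt (fun y : ℝ => Real.exp y - 1) (Real.exp y) y :=
    (Real.hasDerivAt_exp y).sub_const 1
  have d2 : HasDerivAt (fun y : ℝ => Real.log (Real.exp y - 1))
      (Real.exp y / (Real.exp y - 1)) y := d1.log hne
  have d3 : HasDerivAt (fun y : ℝ => Real.log y) (1/y) y := by
    simpa using (hasDerivAt_id y).log hy.ne'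
  have := (d2.const_mul α).sub d3
  simp only [pfun, one_div] at this ⊢
  exact this

lemma hasDerivAt_pfun {α y : ℝ} (hy : 0 < y) :
    HasDerivAt (pfun α)
      (α * ((Real.exp y * (Real.exp y - 1) - Real.exp y * Real.exp y) / (Real.exp y - 1)^2)
        - (-(y^2)⁻¹)) y := by
  have hne : Real.exp y - 1 ≠ 0 := (expy_sub_one_pos hy).ne'
  have d1 : HasDerivAt (fun y : ℝ => Real.exp y - 1) (Real.exp y) y :=
    (Real.hasDerivAt_exp y).sub_const 1
  have d2 := (Real.hasDerivAt_exp y).div d1 hne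
  exact (d2.const_mul α).sub (hasDerivAt_inv hy.ne')

lemma pfun_deriv_pos {α y : ℝ} (hα0 : 0 < α) (hα1 : α < 1) (hy : 0 < y) :
    0 < α * ((Real.exp y * (Real.exp y - 1) - Real.exp y * Real.exp y) / (Real.exp y - 1)^2)
        - (-(y^2)⁻¹) := by
  have h1 : 0 < Real.exp y - 1 := expy_sub_one_pos hy
  have hk := key_ineq hy
  have h3 : Real.exp (y/2) * Real.exp (y/2) = Real.exp y := by
    rw [← Real.exp_add]; ring_nf
  have h5 : 0 < Real.exp (y/2) := Real.exp_pos _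
  have h6 : (y * Real.exp (y/2))^2 < (Real.exp y - 1)^2 :=
    pow_lt_pow_left₀ hk (mul_pos hy h5).le two_ne_zero
  have hnum : α * Real.exp y * y^2 < (Real.exp y - 1)^2 := by
    nlinarith [h6, mul_nonneg (Real.exp_pos y).le (sq_nonneg y)]
  have heq : α * ((Real.exp y * (Real.exp y - 1) - Real.exp y * Real.exp y) / (Real.exp y - 1)^2)
        - (-(y^2)⁻¹)
      = ((Real.exp y - 1)^2 - α * Real.exp y * y^2) / (y^2 * (Real.exp y - 1)^2) := by
    field_simp
    ring
  rw [heq]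
  apply div_pos (by linarith) (by positivity)

lemma strict_min {α : ℝ} (hα0 : 0 < α) (hα1 : α < 1) {y0 : ℝ} (hy0 : 0 < y0)
    (hfoc : α * Real.exp y0 * y0 = Real.exp y0 - 1) :
    ∀ y ∈ Set.Ioi (0:ℝ), y ≠ y0 → hfun α y0 < hfun α y := by
  have hφmono : StrictMonoOn (pfun α) (Ioi 0) := by
    apply strictMonoOn_of_deriv_pos (convex_Ioi 0)
    · exact fun y hy => (hasDerivAt_pfun hy).continuousAt.continuousWithinAt
    · intro y hy
      rw [interior_Ioi] at hy
      rw [(hasDerivAt_pfun hy).deriv]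
      exact pfun_deriv_pos hα0 hα1 hy
  have hφ0 : pfun α y0 = 0 := by
    have h1 : Real.exp y0 - 1 ≠ 0 := (expy_sub_one_pos hy0).ne'
    simp only [pfun]
    field_simp
    linarith [hfoc]
  have hcont : ∀ s ⊆ Ioi (0:ℝ), ContinuousOn (hfun α) s := fun s hs y hy =>
    (hasDerivAt_hfun (hs hy)).continuousAt.continuousWithinAt
  have hanti : StrictAntiOn (hfun α) (Ioc 0 y0) := by
    apply strictAntiOn_of_deriv_neg (convex_Ioc 0 y0) (hcont _ Ioc_subset_Ioi_self)
    intro y hy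
    rw [interior_Ioc] at hy
    rw [(hasDerivAt_hfun hy.1).deriv]
    have := hφmono hy.1 hy0 hy.2
    rw [hφ0] at this
    exact this
  have hmono : StrictMonoOn (hfun α) (Ici y0) := by
    apply strictMonoOn_of_deriv_pos (convex_Ici y0)
        (hcont _ (fun y hy => lt_of_lt_of_le hy0 hy))
    intro y hy
    rw [interior_Ici] at hy
    rw [(hasDerivAt_hfun (hy0.trans hy)).deriv]
    have := hφmono hy0 (hy0.trans hy) hy
    rw [hφ0] at this
    exact this
  intro y hy hne
  rcases lt_or_gt_of_ne hne with hlt | hgt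
  · exact hanti ⟨hy, hlt.le⟩ ⟨hy0, le_rfl⟩ hlt
  · exact hmono self_mem_Ici hgt.le hgt

lemma g_eq (α : ℝ) {y : ℝ} (hy : 0 < y) :
    (Real.exp y - 1) ^ α / y = Real.exp (hfun α y) := by
  rw [Real.rpow_def_of_pos (expy_sub_one_pos hy)]
  simp only [hfun]
  rw [Real.exp_sub, Real.exp_log hy, mul_comm]

theorem stmt_14 (α : ℝ) (hα : α ∈ Set.Ioo (0 : ℝ) 1) (W : ℝ → ℝ)
    (hW : ∀ z : ℝ, -Real.exp (-1) ≤ z → W z * Real.exp (W z) = z ∧ -1 ≤ W z) :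
    (∃! y, y ∈ Set.Ioi (0 : ℝ) ∧
        IsMinOn (fun y : ℝ => (Real.exp y - 1) ^ α / y) (Set.Ioi 0) y) ∧
      (W (-α⁻¹ * Real.exp (-α⁻¹)) + α⁻¹) ∈ Set.Ioi (0 : ℝ) ∧
      IsMinOn (fun y : ℝ => (Real.exp y - 1) ^ α / y) (Set.Ioi 0)
        (W (-α⁻¹ * Real.exp (-α⁻¹)) + α⁻¹) ∧
      α * Real.exp (W (-α⁻¹ * Real.exp (-α⁻¹)) + α⁻¹)
          * (W (-α⁻¹ * Real.exp (-α⁻¹)) + α⁻¹) =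
        Real.exp (W (-α⁻¹ * Real.exp (-α⁻¹)) + α⁻¹) - 1 := by
  obtain ⟨hα0, hα1⟩ := hα
  set β := α⁻¹ with hβdef
  have hβ : 1 < β := (one_lt_inv₀ hα0).2 hα1
  have hz : -Real.exp (-1) ≤ -β * Real.exp (-β) := by
    have h1 : β ≤ Real.exp (β - 1) := by
      have := Real.add_one_le_exp (β - 1); linarith
    have h2 : Real.exp (β - 1) * Real.exp (-β) = Real.exp (-1) := by
      rw [← Real.exp_add]; ring_nf
    nlinarith [Real.exp_pos (-β), mul_le_mul_of_nonneg_right h1 (Real.exp_pos (-β)).le]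
  obtain ⟨hW1, hW2⟩ := hW _ hz
  set w := W (-β * Real.exp (-β)) with hwdef
  set y0 := w + β with hy0def
  have hy0 : 0 < y0 := by simp only [hy0def]; linarith
  have hy0' : y0 ∈ Set.Ioi (0:ℝ) := hy0
  have hwexp : w * Real.exp y0 = -β := by
    have h3 : Real.exp w * Real.exp β = Real.exp y0 := by
      rw [← Real.exp_add, hy0def]
    have h4 : Real.exp (-β) * Real.exp β = 1 := by rw [← Real.exp_add]; simp
    calc w * Real.exp y0 = (w * Real.exp w) * Real.exp β := by rw [← h3]; ring
      _ = (-β * Real.exp (-β)) * Real.exp β := by rw [hW1]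
      _ = -β := by rw [mul_assoc, h4, mul_one]
  have hab : α * β = 1 := mul_inv_cancel₀ hα0.ne'
  have hfoc : α * Real.exp y0 * y0 = Real.exp y0 - 1 := by
    have h5 : (y0 - β) * Real.exp y0 = -β := by
      rw [show y0 - β = w by rw [hy0def]; ring]; exact hwexp
    linear_combination α * h5 + (Real.exp y0 - 1) * hab
  have hstrict := strict_min hα0 hα1 hy0 hfoc
  have hmin : IsMinOn (fun y : ℝ => (Real.exp y - 1) ^ α / y) (Set.Ioi 0) y0 := by
    rw [isMinOn_iff]
    intro y hy
    rcases eq_or_ne y y0 with rfl | hne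
    · exact le_refl _
    · show (Real.exp y0 - 1) ^ α / y0 ≤ (Real.exp y - 1) ^ α / y
      rw [g_eq α hy0, g_eq α (Set.mem_Ioi.mp hy)]
      exact (Real.exp_lt_exp.mpr (hstrict y hy hne)).le
  refine ⟨⟨y0, ⟨hy0', hmin⟩, ?_⟩, hy0', hmin, hfoc⟩
  rintro y' ⟨hy', hmin'⟩
  by_contra hne
  have h6 : (Real.exp y' - 1) ^ α / y' ≤ (Real.exp y0 - 1) ^ α / y0 :=
    isMinOn_iff.mp hmin' y0 hy0'
  rw [g_eq α (Set.mem_Ioi.mp hy'), g_eq α hy0] at h6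
  exact absurd h6 (not_le.mpr (Real.exp_lt_exp.mpr (hstrict y' hy' hne)))
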